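/- Let M_{0,1}, M_{0,0} be {0,1}-valued random variables with P(M_{0,1} > M_{0,0}) = 2/3 and P(M_{0,1} < M_{0,0}) = 1/3, let Y_{0,0}, Y_{0,1} be integrable random variables, and let a ∈ ℝ satisfy E[Y_{0,1} − Y_{0,0} | M_{0,1} > M_{0,0}] = a and E[Y_{0,1} − Y_{0,0} | M_{0,1} < M_{0,0}] = 2a. Then E[M_{0,1} − M_{0,0}] = 1/3 and E[Y_{0,M_{0,1}} − Y_{0,M_{0,0}}] = 0, so the Wald ratio E[Y_{0,M_{0,1}} − Y_{0,M_{0,0}}] / E[M_{0,1} − M_{0,0}] equals 0 even though both subgroup average effects equal a and 2a respectively. -/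

import Mathlib

open MeasureTheory ProbabilityTheory

/-- Conditional mean `E[W | A] = E[W·1_A] / P(A)` (set integral divided by probability). -/
noncomputable def condMean {Ω : Type*} [MeasurableSpace Ω] (P : Measure Ω)
    (W : Ω → ℝ) (A : Set Ω) : ℝ :=
  (∫ ω in A, W ω ∂P) / (P A).toReal

/-- A `{0,1}`-valued (Bool-coded) random variable, viewed as a real number. -/
noncomputable def bR (b : Bool) : ℝ := if b then 1 else 0

/-- numerical example — if `P(M_{0,1} > M_{0,0}) = 2/3`,
`P(M_{0,1} < M_{0,0}) = 1/3`, and the subgroup average effects are `a` and `2a`, then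
`E[M_{0,1} - M_{0,0}] = 1/3` and `E[Y_{0,M_{0,1}} - Y_{0,M_{0,0}}] = 0`, so the Wald ratio
is `0` even though the subgroup effects are `a` and `2a`. -/
theorem stmt_19 {Ω : Type*} [MeasurableSpace Ω] (P : Measure Ω) [IsProbabilityMeasure P]
    (M01 M00 : Ω → Bool) (Y0 : Bool → Ω → ℝ)
    (hM01 : Measurable M01) (hM00 : Measurable M00)
    (hY : ∀ m, Integrable (Y0 m) P)
    (a : ℝ)
    (hgt : (P {ω | M00 ω < M01 ω}).toReal = 2/3)
    (hlt : (P {ω | M01 ω < M00 ω}).toReal = 1/3)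
    (ha : condMean P (fun ω => Y0 true ω - Y0 false ω) {ω | M00 ω < M01 ω} = a)
    (h2a : condMean P (fun ω => Y0 true ω - Y0 false ω) {ω | M01 ω < M00 ω} = 2 * a) :
    (∫ ω, (bR (M01 ω) - bR (M00 ω)) ∂P) = 1/3
    ∧ (∫ ω, (Y0 (M01 ω) ω - Y0 (M00 ω) ω) ∂P) = 0
    ∧ (∫ ω, (Y0 (M01 ω) ω - Y0 (M00 ω) ω) ∂P)
        / (∫ ω, (bR (M01 ω) - bR (M00 ω)) ∂P) = 0 := by
  set A := {ω | M00 ω < M01 ω} with hA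
  set B := {ω | M01 ω < M00 ω} with hB
  have hAeq : A = M00 ⁻¹' {false} ∩ M01 ⁻¹' {true} := by
    ext ω
    simp [hA, Bool.lt_iff, and_comm]
  have hBeq : B = M00 ⁻¹' {true} ∩ M01 ⁻¹' {false} := by
    ext ω
    simp [hB, Bool.lt_iff, and_comm]
  have hAm : MeasurableSet A := by
    rw [hAeq]
    exact (hM00 (measurableSet_singleton _)).inter (hM01 (measurableSet_singleton _))
  have hBm : MeasurableSet B := by
    rw [hBeq]
    exact (hM00 (measurableSet_singleton _)).inter (hM01 (measurableSet_singleton _))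
  set W : Ω → ℝ := fun ω => Y0 true ω - Y0 false ω with hW
  have hWint : Integrable W P := (hY true).sub (hY false)
  -- subgroup set integrals
  have hIA : ∫ ω in A, W ω ∂P = a * (2/3) := by
    have h := ha
    rw [condMean, hgt] at h
    have : (2:ℝ)/3 ≠ 0 := by norm_num
    field_simp at h
    linarith
  have hIB : ∫ ω in B, W ω ∂P = 2 * a * (1/3) := by
    have h := h2a
    rw [condMean, hlt] at h
    field_simp at h
    linarith
  -- first integral
  have hfun1 : (fun ω => bR (M01 ω) - bR (M00 ω))
      = fun ω => A.indicator (fun _ => (1:ℝ)) ω - B.indicator (fun _ => (1:ℝ)) ω := by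
    funext ω
    cases h1 : M01 ω <;> cases h2 : M00 ω <;>
      simp [bR, hA, hB, Set.indicator, Set.mem_setOf_eq, h1, h2, Bool.lt_iff]
  have hint1 : (∫ ω, (bR (M01 ω) - bR (M00 ω)) ∂P) = 1/3 := by
    rw [hfun1, integral_sub ((integrable_const (1:ℝ)).indicator hAm)
      ((integrable_const (1:ℝ)).indicator hBm)]
    rw [integral_indicator hAm, integral_indicator hBm]
    simp [hgt, hlt]
    rw [measureReal_def, measureReal_def, hgt, hlt]
    norm_num
  have hfun2 : (fun ω => Y0 (M01 ω) ω - Y0 (M00 ω) ω)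
      = fun ω => A.indicator W ω - B.indicator W ω := by
    funext ω
    cases h1 : M01 ω <;> cases h2 : M00 ω <;>
      simp [hA, hB, hW, Set.indicator, Set.mem_setOf_eq, h1, h2, Bool.lt_iff]
  have hint2 : (∫ ω, (Y0 (M01 ω) ω - Y0 (M00 ω) ω) ∂P) = 0 := by
    rw [hfun2, integral_sub (hWint.indicator hAm) (hWint.indicator hBm),
      integral_indicator hAm, integral_indicator hBm, hIA, hIB]
    ring
  exact ⟨hint1, hint2, by rw [hint2]; simp⟩
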